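/- For the regular polygon with n ≥ 3 unit sides and constant weight a ≡ 1, the vectors A = ∑_{j=0}^{n-1} Re(ξ^j(ξ-1))·ξ^j(ξ-1)/|1-ξ| and B = ∑_{j=0}^{n-1} Im(ξ^j(ξ-1))·ξ^j(ξ-1)/|1-ξ| (with ξ = e^{2πi/n}) are ℝ-linearly independent; hence the regular polygon with constant weights is a flexible unbalanced network. -/

import Mathlib

open Complex ComplexConjugate Finset

lemma sum_zmod_val (n : ℕ) [NeZero n] (f : ℕ → ℂ) :
    ∑ j : ZMod n, f j.val = ∑ k ∈ Finset.range n, f k :=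
  Finset.sum_nbij' (fun j => j.val) (fun k => ((k : ℕ) : ZMod n))
    (fun a _ => Finset.mem_range.2 (ZMod.val_lt a))
    (fun _ _ => Finset.mem_univ _)
    (fun a _ => ZMod.natCast_zmod_val a)
    (fun k hk => ZMod.val_cast_of_lt (Finset.mem_range.1 hk))
    (fun _ _ => rfl)

lemma zmod_const {n : ℕ} [NeZero n] {α : Type*} (g : ZMod n → α)
    (h : ∀ j, g (j + 1) = g j) : ∀ j, g j = g 0 := by
  have key : ∀ k : ℕ, g ((k : ℕ) : ZMod n) = g 0 := by
    intro k
    induction k with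
    | zero => simp
    | succ m ih => rw [Nat.cast_succ, h, ih]
  intro j
  rw [← ZMod.natCast_zmod_val j, key]

lemma re_eq (w : ℂ) : ((w.re : ℝ) : ℂ) = (w + conj w) / 2 := by
  rw [Complex.add_conj]; push_cast; ring

lemma im_eq (w : ℂ) : ((w.im : ℝ) : ℂ) = (w - conj w) / (2 * Complex.I) := by
  rw [Complex.sub_conj]
  field_simp
  push_cast; ring

open Complex in
/-- Differential of the force contribution of a single unit edge. -/
noncomputable def dForce (w wdot : ℝ) (d dPhi : ℂ) : ℂ :=
  (wdot : ℂ) * d +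
    (w : ℂ) * (dPhi - d * ((((starRingEnd ℂ d) * dPhi).re : ℝ) : ℂ))

/-- For the regular polygon with `n ≥ 3` unit sides (vertices
`z j = ξ^j/|1-ξ|`, `ξ = e^{2πi/n}`) and constant weight `a ≡ 1`, the vectors
`A = ∑_j Re(ξ^j(ξ-1))·ξ^j(ξ-1)/|1-ξ|` and `B = ∑_j Im(ξ^j(ξ-1))·ξ^j(ξ-1)/|1-ξ|`
are `ℝ`-linearly independent; hence the regular polygon with constant weights
is a flexible unbalanced network (the kernel of `Λ = (D F, D L)` is reduced to
translations). -/
theorem regular_polygon_flexible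
    (n : ℕ) (hn : 3 ≤ n) [NeZero n]
    (ξ : ℂ) (hξ : ξ = Complex.exp (2 * Real.pi * Complex.I / n))
    (z : ZMod n → ℂ)
    (hz : ∀ j : ZMod n, z j = ξ ^ (j.val) / ((‖1 - ξ‖ : ℝ) : ℂ)) :
    LinearIndependent ℝ
      ![∑ j ∈ Finset.range n,
          ((((ξ ^ j * (ξ - 1)).re : ℝ)) : ℂ) * (ξ ^ j * (ξ - 1)) /
            ((‖1 - ξ‖ : ℝ) : ℂ),
        ∑ j ∈ Finset.range n,
          ((((ξ ^ j * (ξ - 1)).im : ℝ)) : ℂ) * (ξ ^ j * (ξ - 1)) /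
            ((‖1 - ξ‖ : ℝ) : ℂ)]
    ∧
    (∀ (Ψ : ZMod n → ℂ) (adot : ZMod n → ℝ),
      (∀ j : ZMod n,
        dForce 1 (adot j) (z (j + 1) - z j) (Ψ (j + 1) - Ψ j)
          + dForce 1 (adot (j - 1)) (z (j - 1) - z j) (Ψ (j - 1) - Ψ j) = 0) →
      (∀ j : ZMod n,
        ((starRingEnd ℂ (z j - z (j + 1))) * (Ψ j - Ψ (j + 1))).re = 0) →
      ((∃ e : ℂ, ∀ j, Ψ j = e) ∧ ∀ j, adot j = 0)) := by
  have hn0 : (n : ℂ) ≠ 0 := Nat.cast_ne_zero.2 (NeZero.ne n)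
  have hprim : IsPrimitiveRoot ξ n := hξ ▸ Complex.isPrimitiveRoot_exp n (NeZero.ne n)
  have hξn : ξ ^ n = 1 := hprim.pow_eq_one
  have hξ1 : ξ ≠ 1 := hprim.ne_one (by omega)
  have hξ2 : ξ ^ 2 ≠ 1 := hprim.pow_ne_one_of_pos_of_lt (by norm_num) (by omega)
  have habs : ‖ξ‖ = 1 := hprim.norm'_eq_one (NeZero.ne n)
  have hconj : conj ξ * ξ = 1 := by
    rw [mul_comm, Complex.mul_conj, Complex.normSq_eq_norm_sq, habs]
    norm_num
  set κ : ℂ := ((‖1 - ξ‖ : ℝ) : ℂ) with hκdef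
  have h1ξ : (1 : ℂ) - ξ ≠ 0 := sub_ne_zero.2 (Ne.symm hξ1)
  have hκ0 : κ ≠ 0 := by
    rw [hκdef]
    exact_mod_cast norm_ne_zero_iff.2 h1ξ
  have habs' : ‖1 - ξ‖ = ‖ξ - 1‖ :=
    norm_sub_rev 1 ξ
  have hκsq : conj (ξ - 1) * (ξ - 1) = κ ^ 2 := by
    rw [mul_comm, Complex.mul_conj, hκdef, habs', Complex.normSq_eq_norm_sq]
    push_cast
    ring
  have hconjpow : ∀ v : ℕ, conj (ξ ^ v) * ξ ^ v = 1 := by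
    intro v
    rw [map_pow, ← mul_pow, hconj, one_pow]
  have hnormw : ∀ v : ℕ, conj (ξ ^ v * (ξ - 1)) * (ξ ^ v * (ξ - 1)) = κ ^ 2 := by
    intro v
    calc conj (ξ ^ v * (ξ - 1)) * (ξ ^ v * (ξ - 1))
        = (conj (ξ ^ v) * ξ ^ v) * (conj (ξ - 1) * (ξ - 1)) := by rw [map_mul]; ring
      _ = κ ^ 2 := by rw [hconjpow, hκsq, one_mul]
  have hgeom : ∑ k ∈ Finset.range n, (ξ ^ k) ^ 2 = 0 := by
    have h2n : (ξ ^ 2) ^ n = 1 := by rw [← pow_mul, mul_comm, pow_mul, hξn, one_pow]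
    calc ∑ k ∈ Finset.range n, (ξ ^ k) ^ 2
        = ∑ k ∈ Finset.range n, (ξ ^ 2) ^ k := by
          refine Finset.sum_congr rfl fun k _ => ?_
          rw [← pow_mul, ← pow_mul, mul_comm]
      _ = ((ξ ^ 2) ^ n - 1) / (ξ ^ 2 - 1) := geom_sum_eq hξ2 n
      _ = 0 := by rw [h2n]; simp
  have hsq : ∑ j ∈ Finset.range n, (ξ ^ j * (ξ - 1)) ^ 2 = 0 := by
    calc ∑ j ∈ Finset.range n, (ξ ^ j * (ξ - 1)) ^ 2
        = (∑ j ∈ Finset.range n, (ξ ^ j) ^ 2) * (ξ - 1) ^ 2 := by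
          rw [Finset.sum_mul]
          exact Finset.sum_congr rfl fun j _ => by ring
      _ = 0 := by rw [hgeom, zero_mul]
  have hA : ∑ j ∈ Finset.range n,
      ((((ξ ^ j * (ξ - 1)).re : ℝ)) : ℂ) * (ξ ^ j * (ξ - 1)) / κ = n * κ / 2 := by
    calc ∑ j ∈ Finset.range n, ((((ξ ^ j * (ξ - 1)).re : ℝ)) : ℂ) * (ξ ^ j * (ξ - 1)) / κ
        = ∑ j ∈ Finset.range n, ((ξ ^ j * (ξ - 1)) ^ 2 + κ ^ 2) / (2 * κ) := by
          refine Finset.sum_congr rfl fun j _ => ?_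
          rw [re_eq]
          linear_combination (1 / (2 * κ)) * hnormw j
      _ = (∑ j ∈ Finset.range n, (ξ ^ j * (ξ - 1)) ^ 2 + n * κ ^ 2) / (2 * κ) := by
          rw [← Finset.sum_div, Finset.sum_add_distrib, Finset.sum_const, Finset.card_range,
            nsmul_eq_mul]
      _ = n * κ / 2 := by rw [hsq, zero_add]; field_simp
  have hB : ∑ j ∈ Finset.range n,
      ((((ξ ^ j * (ξ - 1)).im : ℝ)) : ℂ) * (ξ ^ j * (ξ - 1)) / κ = n * κ / 2 * Complex.I := by
    calc ∑ j ∈ Finset.range n, ((((ξ ^ j * (ξ - 1)).im : ℝ)) : ℂ) * (ξ ^ j * (ξ - 1)) / κ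
        = ∑ j ∈ Finset.range n, ((ξ ^ j * (ξ - 1)) ^ 2 - κ ^ 2) / (2 * Complex.I * κ) := by
          refine Finset.sum_congr rfl fun j _ => ?_
          rw [im_eq]
          linear_combination (-1 / (2 * Complex.I * κ)) * hnormw j
      _ = (∑ j ∈ Finset.range n, (ξ ^ j * (ξ - 1)) ^ 2 - n * κ ^ 2) / (2 * Complex.I * κ) := by
          rw [← Finset.sum_div, Finset.sum_sub_distrib, Finset.sum_const, Finset.card_range,
            nsmul_eq_mul]
      _ = n * κ / 2 * Complex.I := by
          rw [hsq, zero_sub, div_eq_iff (by simp [Complex.I_ne_zero, hκ0])]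
          linear_combination (-(n : ℂ) * κ ^ 2) * Complex.I_sq
  constructor
  · rw [hA, hB, LinearIndependent.pair_iff]
    intro s t hst
    have hm : (n : ℂ) * κ / 2 ≠ 0 := div_ne_zero (mul_ne_zero hn0 hκ0) two_ne_zero
    have hprod : ((n : ℂ) * κ / 2) * ((s : ℂ) + (t : ℂ) * Complex.I) = 0 := by
      rw [← hst]
      simp only [Complex.real_smul]
      ring
    have h0 : ((s : ℂ) + (t : ℂ) * Complex.I) = 0 :=
      (mul_eq_zero.1 hprod).resolve_left hm
    constructor
    · have := congrArg Complex.re h0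
      simpa using this
    · have := congrArg Complex.im h0
      simpa using this
  · intro Ψ adot hF hL
    obtain ⟨d, hddef⟩ : ∃ d : ZMod n → ℂ, ∀ j, d j = z (j + 1) - z j := ⟨_, fun _ => rfl⟩
    obtain ⟨P, hPdef⟩ : ∃ P : ZMod n → ℂ, ∀ j, P j = Ψ (j + 1) - Ψ j := ⟨_, fun _ => rfl⟩
    have hd : ∀ j : ZMod n, d j = ξ ^ j.val * (ξ - 1) / κ := by
      intro j
      have hval : ξ ^ (j + 1).val = ξ ^ j.val * ξ := by
        haveI : Fact (1 < n) := ⟨by omega⟩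
        calc ξ ^ (j + 1).val = ξ ^ ((j.val + 1) % n) := by rw [ZMod.val_add, ZMod.val_one]
          _ = ξ ^ (j.val + 1) := (pow_eq_pow_mod _ hξn).symm
          _ = ξ ^ j.val * ξ := pow_succ ξ _
      rw [hddef, hz, hz, hval]
      ring
    have hdunit : ∀ j : ZMod n, conj (d j) * d j = 1 := by
      intro j
      rw [hd, map_div₀, map_mul, Complex.conj_ofReal, ← hκdef]
      rw [div_mul_div_comm,
        show conj (ξ ^ j.val) * conj (ξ - 1) * (ξ ^ j.val * (ξ - 1))
          = (conj (ξ ^ j.val) * ξ ^ j.val) * (conj (ξ - 1) * (ξ - 1)) from by ring,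
        hconjpow, hκsq, one_mul, show κ * κ = κ ^ 2 from by ring]
      exact div_self (pow_ne_zero 2 hκ0)
    have hL' : ∀ j : ZMod n, (conj (d j) * P j).re = 0 := by
      intro j
      have h := hL j
      rw [show z j - z (j + 1) = -(d j) from by rw [hddef]; ring,
        show Ψ j - Ψ (j + 1) = -(P j) from by rw [hPdef]; ring,
        map_neg, neg_mul_neg] at h
      exact h
    have hstep : ∀ j : ZMod n,
        (adot j : ℂ) * d j + P j = (adot (j - 1) : ℂ) * d (j - 1) + P (j - 1) := by
      intro j
      have hF' := hF j
      unfold dForce at hF'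
      rw [show z (j + 1) - z j = d j from (hddef j).symm,
        show Ψ (j + 1) - Ψ j = P j from (hPdef j).symm,
        show z (j - 1) - z j = -(d (j - 1)) from by rw [hddef, sub_add_cancel]; ring,
        show Ψ (j - 1) - Ψ j = -(P (j - 1)) from by rw [hPdef, sub_add_cancel]; ring,
        map_neg, neg_mul_neg] at hF'
      rw [hL' j, hL' (j - 1)] at hF'
      simp only [Complex.ofReal_zero, mul_zero, sub_zero, Complex.ofReal_one, one_mul] at hF'
      linear_combination hF'
    obtain ⟨c, hconst⟩ : ∃ c : ℂ, ∀ j : ZMod n, (adot j : ℂ) * d j + P j = c :=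
      ⟨_, zmod_const (fun j => (adot j : ℂ) * d j + P j)
        (fun j => by
          have h := hstep (j + 1)
          rwa [add_sub_cancel_right] at h)⟩
    have hPc : ∀ j : ZMod n, P j = c - (adot j : ℂ) * d j := by
      intro j
      linear_combination hconst j
    have hadot : ∀ j : ZMod n, (adot j : ℝ) = (conj (d j) * c).re := by
      intro j
      have h := hL' j
      rw [hPc j,
        show conj (d j) * (c - (adot j : ℂ) * d j)
          = conj (d j) * c - (adot j : ℂ) * (conj (d j) * d j) from by ring,
        hdunit, mul_one] at h
      simp only [Complex.sub_re, Complex.ofReal_re] at h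
      linarith
    have hsumP : ∑ j : ZMod n, P j = 0 := by
      rw [Finset.sum_congr rfl (fun j _ => hPdef j), Finset.sum_sub_distrib, sub_eq_zero]
      exact Fintype.sum_equiv (Equiv.addRight (1 : ZMod n)) _ _ (fun j => rfl)
    have hsumu : (n : ℂ) * c = ∑ j : ZMod n, (adot j : ℂ) * d j := by
      have h1 : ∑ j : ZMod n, ((adot j : ℂ) * d j + P j) = (n : ℂ) * c := by
        rw [Finset.sum_congr rfl (fun j _ => hconst j), Finset.sum_const]
        simp [ZMod.card, nsmul_eq_mul]
      rw [← h1, Finset.sum_add_distrib, hsumP, add_zero]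
    have hd2sum : ∑ j : ZMod n, (d j) ^ 2 = 0 := by
      have heach : ∀ j : ZMod n, (d j) ^ 2
          = (fun k : ℕ => (ξ ^ k) ^ 2 * ((ξ - 1) ^ 2 / κ ^ 2)) j.val := by
        intro j
        rw [hd]
        simp only
        ring
      rw [Finset.sum_congr rfl (fun j _ => heach j),
        sum_zmod_val n (fun k => (ξ ^ k) ^ 2 * ((ξ - 1) ^ 2 / κ ^ 2)),
        ← Finset.sum_mul, hgeom, zero_mul]
    have hkey : ∑ j : ZMod n, (adot j : ℂ) * d j = (n : ℂ) * c / 2 := by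
      have heach : ∀ j : ZMod n,
          (adot j : ℂ) * d j = (c + conj c * (d j) ^ 2) / 2 := by
        intro j
        rw [hadot j, re_eq, map_mul, Complex.conj_conj]
        linear_combination (c / 2) * hdunit j
      rw [Finset.sum_congr rfl (fun j _ => heach j), ← Finset.sum_div,
        Finset.sum_add_distrib, Finset.sum_const, ← Finset.mul_sum, hd2sum, mul_zero, add_zero]
      simp only [Finset.card_univ, ZMod.card, nsmul_eq_mul]
    have hc0 : c = 0 := by
      have h := hsumu.trans hkey
      have h2 : (n : ℂ) * c = 0 := by linear_combination (2 : ℂ) * h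
      exact (mul_eq_zero.1 h2).resolve_left hn0
    have hadot0 : ∀ j, adot j = 0 := by
      intro j
      rw [hadot j, hc0, mul_zero, Complex.zero_re]
    have hP0 : ∀ j : ZMod n, P j = 0 := by
      intro j
      rw [hPc j, hc0, hadot0 j]
      simp
    refine ⟨⟨Ψ 0, zmod_const Ψ (fun j => ?_)⟩, hadot0⟩
    have h := hP0 j
    rw [hPdef] at h
    exact sub_eq_zero.1 h
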